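/- arXiv:2409.20543 — 4 statements merged into one kernel-verified Lean document; each statement's English description precedes it below -/
import Mathlib

section
/- Let p be a prime, n ≥ 1, and R a commutative ring in which p^n = 0. Then in the ring of p-typical Witt vectors W(R), one has V(p^{n-1} · 1) = p^n · 1, where V is the Verschiebung. -/
open Finset

lemma aux_dvd_coeff (p : ℕ) [hp : Fact p.Prime] (n : ℕ) (hn : 1 ≤ n) (k : ℕ) :
    (p : ℤ) ^ n ∣ (((p ^ n : ℕ) : WittVector p ℤ) -
      WittVector.verschiebung ((p ^ (n - 1) : ℕ) : WittVector p ℤ)).coeff k := by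
  set d : WittVector p ℤ := ((p ^ n : ℕ) : WittVector p ℤ) -
      WittVector.verschiebung ((p ^ (n - 1) : ℕ) : WittVector p ℤ) with hd
  have hghost : ∀ k, (p : ℤ) ^ (n + k) ∣ WittVector.ghostComponent k d := by
    intro k
    cases k with
    | zero =>
      have h0 : WittVector.ghostComponent 0 d = (p : ℤ) ^ n := by
        rw [hd, map_sub, WittVector.ghostComponent_zero_verschiebung, sub_zero, map_natCast]
        push_cast; ring
      rw [Nat.add_zero, h0]
    | succ m =>
      have : WittVector.ghostComponent (m + 1) d = 0 := by
        rw [hd, map_sub, map_natCast, WittVector.ghostComponent_verschiebung, map_natCast]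
        push_cast
        rw [← pow_succ']
        rw [Nat.sub_add_cancel hn]
        ring
      simp [this]
  induction k using Nat.strong_induction_on with
  | _ k ih =>
    have hsum : WittVector.ghostComponent k d =
        (∑ i ∈ range k, (p : ℤ) ^ i * d.coeff i ^ p ^ (k - i)) + (p : ℤ) ^ k * d.coeff k := by
      rw [WittVector.ghostComponent_apply, aeval_wittPolynomial, Finset.sum_range_succ,
        Nat.sub_self, pow_zero, pow_one]
    have hterm : ∀ i ∈ range k, (p : ℤ) ^ (n + k) ∣ (p : ℤ) ^ i * d.coeff i ^ p ^ (k - i) := by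
      intro i hi
      rw [Finset.mem_range] at hi
      obtain ⟨m, hm⟩ := ih i hi
      have h1 : (p : ℤ) ^ (i + n * p ^ (k - i)) ∣ (p : ℤ) ^ i * d.coeff i ^ p ^ (k - i) := by
        rw [pow_add, hm, mul_pow, ← pow_mul]
        exact mul_dvd_mul_left _ (dvd_mul_right _ _)
      refine dvd_trans (pow_dvd_pow _ ?_) h1
      have hle : k - i + 1 ≤ p ^ (k - i) :=
        Nat.succ_le_of_lt (Nat.lt_pow_self hp.out.one_lt)
      calc n + k = n * 1 + k := by ring
        _ ≤ i + n * p ^ (k - i) := by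
            have : n * (k - i + 1) ≤ n * p ^ (k - i) := Nat.mul_le_mul_left n hle
            have h2 : n + (k - i) ≤ n * (k - i + 1) := by nlinarith [hn]
            omega
    have hdvd : (p : ℤ) ^ (n + k) ∣ (p : ℤ) ^ k * d.coeff k := by
      have := hghost k
      rw [hsum] at this
      have hs := Finset.dvd_sum hterm
      exact (dvd_add_right hs).mp this
    rw [add_comm, pow_add] at hdvd
    exact (mul_dvd_mul_iff_left
      (pow_ne_zero k (Int.natCast_ne_zero.mpr hp.out.ne_zero))).mp hdvd

theorem verschiebung_pow_of_pow_eq_zero (p : ℕ) [hp : Fact p.Prime] (R : Type*) [CommRing R]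
    (n : ℕ) (hn : 1 ≤ n) (h : (p ^ n : R) = 0) :
    WittVector.verschiebung ((p ^ (n - 1) : ℕ) : WittVector p R) =
      ((p ^ n : ℕ) : WittVector p R) := by
  have hz : WittVector.map (Int.castRingHom R)
      (((p ^ n : ℕ) : WittVector p ℤ) -
        WittVector.verschiebung ((p ^ (n - 1) : ℕ) : WittVector p ℤ)) = 0 := by
    ext k
    rw [WittVector.map_coeff, WittVector.zero_coeff]
    obtain ⟨m, hm⟩ := aux_dvd_coeff p n hn k
    rw [hm, map_mul, map_pow]
    simp only [Int.coe_castRingHom, Int.cast_natCast]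
    rw [h, zero_mul]
  rw [map_sub, map_natCast, WittVector.map_verschiebung, map_natCast, sub_eq_zero] at hz
  exact hz.symm
end

section
/- Let k be a field and let M be an ℕ-graded module over the polynomial ring k[x], where x has degree 1, such that each graded piece M_n is a finite-dimensional k-vector space. If multiplication by x is injective on M (i.e. M is torsion-free), then M is a free k[x]-module. -/
open Polynomial in
/-- An ℕ-graded `k[x]`-module with finite-dimensional graded pieces on which
multiplication by `x` is injective is free. -/
theorem free_of_graded_torsionFree (k : Type*) [Field k] (M : Type*) [AddCommGroup M]
    [Module (Polynomial k) M] [Module k M] [IsScalarTower k (Polynomial k) M]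
    (ℳ : ℕ → Submodule k M) [DirectSum.Decomposition ℳ]
    (hgr : ∀ (n : ℕ), ∀ m ∈ ℳ n, (Polynomial.X : Polynomial k) • m ∈ ℳ (n + 1))
    (hfd : ∀ n, FiniteDimensional k (ℳ n))
    (hinj : Function.Injective (fun m : M => (Polynomial.X : Polynomial k) • m)) :
    Module.Free (Polynomial k) M := by
  classical
  set μ : M →ₗ[k] M :=
    { toFun := fun m => (Polynomial.X : Polynomial k) • m
      map_add' := fun a b => smul_add _ a b
      map_smul' := fun a m => (smul_comm a (Polynomial.X : Polynomial k) m).symm } with hμ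
  set W : ℕ → Submodule k M := fun n => Nat.casesOn n ⊥ (fun m => (ℳ m).map μ) with hWdef
  have hW : ∀ n, W n ≤ ℳ n := by
    rintro (_ | n)
    · exact bot_le
    · rintro x ⟨y, hy, rfl⟩
      exact hgr n y hy
  have hC' := fun n => (Submodule.exists_isCompl ((W n).comap (ℳ n).subtype)).choose_spec
  set C : ℕ → Submodule k M := fun n =>
    (((W n).comap (ℳ n).subtype).exists_isCompl.choose).map (ℳ n).subtype with hCdef
  have hCle : ∀ n, C n ≤ ℳ n := fun n => Submodule.map_subtype_le _ _
  have hsup : ∀ n, C n ⊔ W n = ℳ n := by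
    intro n
    have h1 : C n ⊔ W n = Submodule.map (ℳ n).subtype
        (((W n).comap (ℳ n).subtype).exists_isCompl.choose ⊔ (W n).comap (ℳ n).subtype) := by
      rw [Submodule.map_sup, Submodule.map_comap_subtype, inf_eq_right.2 (hW n)]
    rw [h1, codisjoint_iff.1 (hC' n).symm.codisjoint, Submodule.map_top,
      Submodule.range_subtype]
  have hdisj : ∀ n, Disjoint (C n) (W n) := by
    intro n
    rw [disjoint_iff]
    have h1 : C n ⊓ W n = Submodule.map (ℳ n).subtype
        (((W n).comap (ℳ n).subtype).exists_isCompl.choose ⊓ (W n).comap (ℳ n).subtype) := by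
      rw [Submodule.map_inf _ (ℳ n).injective_subtype, Submodule.map_comap_subtype,
        inf_eq_right.2 (hW n)]
    rw [h1, disjoint_iff.1 (hC' n).symm.disjoint, Submodule.map_bot]
  set ι : Type _ := Σ n : ℕ, Module.Basis.ofVectorSpaceIndex k (C n) with hι
  set B : ι → M := fun s => ((Module.Basis.ofVectorSpace k (C s.1)) s.2 : M) with hB
  have hBmem : ∀ s : ι, B s ∈ C s.1 := fun s => ((Module.Basis.ofVectorSpace k (C s.1)) s.2).2
  have hBval : ∀ s : ι, B s = ((s.2 : C s.1) : M) := fun s => by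
    rw [hB]; simp only [Module.Basis.ofVectorSpace_apply_self]
  have hpow : ∀ (j n : ℕ) (m : M), m ∈ ℳ n → ((X : k[X]) ^ j) • m ∈ ℳ (n + j) := by
    intro j
    induction j with
    | zero => intro n m hm; simpa using hm
    | succ j ih =>
      intro n m hm
      have h : ((X : k[X]) ^ (j+1)) • m = (X : k[X]) • (((X : k[X]) ^ j) • m) := by
        rw [pow_succ, mul_comm, mul_smul]
      rw [h, ← Nat.add_assoc]
      exact hgr _ _ (ih n m hm)
  have hW0 : W 0 = ⊥ := rfl
  have hWs : ∀ n, W (n+1) = (ℳ n).map μ := fun n => rfl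
  have hspan : Submodule.span (Polynomial k) (Set.range B) = ⊤ := by
    rw [eq_top_iff]
    set S : Submodule k M :=
      (Submodule.span (Polynomial k) (Set.range B)).restrictScalars k with hS
    have hMS : ∀ n, ℳ n ≤ S := by
      intro n
      induction n using Nat.strong_induction_on with
      | _ n ih =>
        intro m hm
        rw [← hsup n] at hm
        obtain ⟨c, hc, w, hw, rfl⟩ := Submodule.mem_sup.1 hm
        refine S.add_mem ?_ ?_
        · -- c ∈ C n ⊆ span
          have hCspan : C n ≤ S := by
            have h2 : Submodule.span k ((C n).subtype '' Set.range (Module.Basis.ofVectorSpace k (C n)))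
                = C n := by
              rw [Submodule.span_image, Module.Basis.span_eq, Submodule.map_top, Submodule.range_subtype]
            rw [← h2, Submodule.span_le]
            rintro x ⟨y, ⟨i, rfl⟩, rfl⟩
            exact Submodule.subset_span ⟨⟨n, i⟩, rfl⟩
          exact hCspan hc
        · -- w ∈ W n
          cases n with
          | zero =>
            rw [hW0, Submodule.mem_bot] at hw
            subst hw; exact S.zero_mem
          | succ n =>
            rw [hWs n] at hw
            obtain ⟨y, hy, rfl⟩ := hw
            show (X : k[X]) • y ∈ Submodule.span (Polynomial k) (Set.range B)
            exact Submodule.smul_mem _ _ (ih n (Nat.lt_succ_self n) hy)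
    intro m _
    have : m ∈ (⊤ : Submodule k M) := trivial
    rw [← (DirectSum.Decomposition.isInternal ℳ).submodule_iSup_eq_top] at this
    exact (iSup_le hMS : iSup ℳ ≤ S) this
  -- the graded pieces of the free family
  set g : (ι × ℕ) → M := fun κ => ((X : k[X]) ^ κ.2) • B κ.1 with hg
  have hgmem : ∀ κ : ι × ℕ, g κ ∈ ℳ (κ.1.1 + κ.2) :=
    fun κ => hpow κ.2 κ.1.1 _ (hCle _ (hBmem κ.1))
  -- per-degree independence
  have key : ∀ d : ℕ, ∀ t : Finset (ι × ℕ), (∀ κ ∈ t, κ.1.1 + κ.2 = d) →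
      ∀ f : ι × ℕ → k, ∑ κ ∈ t, f κ • g κ = 0 → ∀ κ ∈ t, f κ = 0 := by
    intro d
    induction d using Nat.strong_induction_on with
    | _ d ih =>
      intro t ht f hsum κ₀ hκ₀
      set t₀ := t.filter (fun κ => κ.2 = 0) with ht₀def
      set t₁ := t.filter (fun κ => ¬ κ.2 = 0) with ht₁def
      set a : M := ∑ κ ∈ t₀, f κ • g κ with ha
      set v : M := ∑ κ ∈ t₁, f κ • (((X : k[X]) ^ (κ.2 - 1)) • B κ.1) with hv
      have hXv : (X : k[X]) • v = ∑ κ ∈ t₁, f κ • g κ := by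
        rw [hv, Finset.smul_sum]
        refine Finset.sum_congr rfl fun κ hκ => ?_
        rw [smul_comm]
        congr 1
        rw [hg, ← mul_smul]
        congr 1
        have h1 : κ.2 - 1 + 1 = κ.2 :=
          Nat.succ_pred_eq_of_pos (Nat.pos_of_ne_zero (Finset.mem_filter.1 hκ).2)
        calc (X : k[X]) * (X : k[X]) ^ (κ.2 - 1) = (X : k[X]) ^ (κ.2 - 1 + 1) := by
              rw [pow_succ, mul_comm]
          _ = (X : k[X]) ^ κ.2 := by rw [h1]
      have haXv : a + (X : k[X]) • v = 0 := by
        rw [hXv, ha, Finset.sum_filter_add_sum_filter_not]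
        exact hsum
      have haC : a ∈ C d := by
        rw [ha]
        refine Submodule.sum_mem _ fun κ hκ => Submodule.smul_mem _ _ ?_
        have h2 : κ.2 = 0 := (Finset.mem_filter.1 hκ).2
        have h1 : κ.1.1 = d := by have := ht κ (Finset.mem_filter.1 hκ).1; omega
        have : g κ = B κ.1 := by rw [hg]; simp only [h2, pow_zero, one_smul]
        rw [this, ← h1]
        exact hBmem κ.1
      have hvM : v ∈ ℳ (d - 1) := by
        rw [hv]
        refine Submodule.sum_mem _ fun κ hκ => Submodule.smul_mem _ _ ?_
        have h2 : κ.2 ≠ 0 := (Finset.mem_filter.1 hκ).2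
        have h1 : κ.1.1 + κ.2 = d := ht κ (Finset.mem_filter.1 hκ).1
        have heq : κ.1.1 + (κ.2 - 1) = d - 1 := by omega
        rw [← heq]
        exact hpow _ _ _ (hCle _ (hBmem κ.1))
      have hXvW : (X : k[X]) • v ∈ W d := by
        cases d with
        | zero =>
          have ht₁e : t₁ = ∅ := by
            refine Finset.eq_empty_of_forall_notMem fun κ hκ => ?_
            have h2 : κ.2 ≠ 0 := (Finset.mem_filter.1 hκ).2
            have h1 : κ.1.1 + κ.2 = 0 := ht κ (Finset.mem_filter.1 hκ).1
            omega
          have : v = 0 := by rw [hv, ht₁e, Finset.sum_empty]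
          rw [this, smul_zero]
          exact (W 0).zero_mem
        | succ e =>
          rw [hWs e]
          exact Submodule.mem_map.2 ⟨v, by simpa using hvM, rfl⟩
      have ha0 : a = 0 := by
        have h1 : a = -((X : k[X]) • v) := eq_neg_of_add_eq_zero_left haXv
        have h2 : a ∈ C d ⊓ W d := ⟨haC, h1 ▸ (W d).neg_mem hXvW⟩
        simpa using (hdisj d).le_bot h2
      have hXv0 : (X : k[X]) • v = 0 := by rwa [ha0, zero_add] at haXv
      have hv0 : v = 0 := hinj (by simpa using hXv0)
      by_cases h0 : κ₀.2 = 0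
      · -- degree-zero part: use the basis of C d
        have hκ₀t₀ : κ₀ ∈ t₀ := Finset.mem_filter.2 ⟨hκ₀, h0⟩
        have hli : LinearIndependent k
            (fun i : Module.Basis.ofVectorSpaceIndex k (C d) => ((i : C d) : M)) :=
          (Module.Basis.ofVectorSpaceIndex.linearIndependent k (C d)).map' (C d).subtype
            (Submodule.ker_subtype _)
        set V : Set M :=
          Set.range (fun i : Module.Basis.ofVectorSpaceIndex k (C d) => ((i : C d) : M)) with hV
        have hBrange : ∀ κ ∈ t₀, B κ.1 ∈ V := by
          intro κ hκ
          obtain ⟨⟨n, i⟩, j⟩ := κ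
          have h2 : j = 0 := (Finset.mem_filter.1 hκ).2
          have h1 : n = d := by
            have := ht _ (Finset.mem_filter.1 hκ).1; simp only at this; omega
          subst h1
          exact ⟨i, (hBval ⟨n, i⟩).symm⟩
        have hl := linearIndepOn_iff.1 hli.linearIndepOn_id
        set l : M →₀ k := ∑ κ ∈ t₀, Finsupp.single (B κ.1) (f κ) with hldef
        have hlsupp : l ∈ Finsupp.supported k k V :=
          Submodule.sum_mem _ fun κ hκ => Finsupp.single_mem_supported k _ (hBrange κ hκ)
        have hltot : Finsupp.linearCombination k id l = 0 := by
          rw [hldef, map_sum]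
          have e1 : ∀ κ ∈ t₀, Finsupp.linearCombination k id (Finsupp.single (B κ.1) (f κ))
              = f κ • g κ := by
            intro κ hκ
            have h2 : κ.2 = 0 := (Finset.mem_filter.1 hκ).2
            rw [Finsupp.linearCombination_single, hg]
            simp only [h2, pow_zero, one_smul, id]
          rw [Finset.sum_congr rfl e1, ← ha, ha0]
        have hl0 : l = 0 := hl l hlsupp hltot
        have hlval : l (B κ₀.1) = f κ₀ := by
          rw [hldef, Finsupp.finset_sum_apply]
          rw [Finset.sum_eq_single κ₀]
          · rw [Finsupp.single_apply, if_pos rfl]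
          · intro κ hκ hne
            rw [Finsupp.single_apply, if_neg]
            intro heq
            apply hne
            have h2 : κ.2 = 0 := (Finset.mem_filter.1 hκ).2
            have h1 : κ.1.1 = d := by have := ht _ (Finset.mem_filter.1 hκ).1; omega
            have h1₀ : κ₀.1.1 = d := by have := ht _ hκ₀; omega
            obtain ⟨⟨n, i⟩, j⟩ := κ
            obtain ⟨⟨n₀, i₀⟩, j₀⟩ := κ₀
            simp only at h1 h1₀ h2 h0 heq ⊢
            have hnn : n = n₀ := by omega
            subst hnn
            subst h2
            subst h0
            rw [hBval ⟨n, i⟩, hBval ⟨n, i₀⟩] at heq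
            have : i = i₀ := Subtype.ext (Subtype.ext heq)
            rw [this]
          · intro h; exact absurd hκ₀t₀ h
        rw [hl0] at hlval
        simpa using hlval.symm
      · -- positive-degree part: use the induction hypothesis
        have hκ₀t₁ : κ₀ ∈ t₁ := Finset.mem_filter.2 ⟨hκ₀, h0⟩
        have hd1 : d - 1 < d := by
          have := ht κ₀ hκ₀; omega
        have hinj₁ : Set.InjOn (fun κ : ι × ℕ => (κ.1, κ.2 - 1)) t₁ := by
          intro x hx y hy hxy
          have hx2 : x.2 ≠ 0 := (Finset.mem_filter.1 hx).2
          have hy2 : y.2 ≠ 0 := (Finset.mem_filter.1 hy).2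
          have hxy' : (x.1, x.2 - 1) = (y.1, y.2 - 1) := hxy
          have e1 : x.1 = y.1 := (Prod.ext_iff.1 hxy').1
          have e2 : x.2 - 1 = y.2 - 1 := (Prod.ext_iff.1 hxy').2
          exact Prod.ext e1 (by omega)
        set t₁' := t₁.image (fun κ : ι × ℕ => (κ.1, κ.2 - 1)) with ht₁'def
        have hsum' : ∑ κ ∈ t₁', f (κ.1, κ.2 + 1) • g κ = 0 := by
          rw [Finset.sum_image hinj₁]
          rw [← hv0, hv]
          refine Finset.sum_congr rfl fun κ hκ => ?_
          have h2 : κ.2 ≠ 0 := (Finset.mem_filter.1 hκ).2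
          have hp : (κ.1, κ.2 - 1 + 1) = κ := Prod.ext rfl (by omega)
          rw [hp]
        have hdeg' : ∀ κ ∈ t₁', κ.1.1 + κ.2 = d - 1 := by
          intro κ' hκ'
          obtain ⟨κ, hκ, rfl⟩ := Finset.mem_image.1 hκ'
          have h2 : κ.2 ≠ 0 := (Finset.mem_filter.1 hκ).2
          have h1 : κ.1.1 + κ.2 = d := ht κ (Finset.mem_filter.1 hκ).1
          simp only
          omega
        have := ih (d-1) hd1 t₁' hdeg' (fun κ => f (κ.1, κ.2 + 1)) hsum'
          (κ₀.1, κ₀.2 - 1) (Finset.mem_image_of_mem _ hκ₀t₁)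
        have hp : (κ₀.1, κ₀.2 - 1 + 1) = κ₀ := Prod.ext rfl (by omega)
        have h2 : f (κ₀.1, κ₀.2 - 1 + 1) = 0 := this
        rwa [hp] at h2
  -- project a vanishing combination onto each degree
  have hproj : ∀ (d : ℕ) (T : Finset (ι × ℕ)) (F : ι × ℕ → k),
      (∑ κ ∈ T, F κ • g κ = 0) →
      ∑ κ ∈ T.filter (fun κ => κ.1.1 + κ.2 = d), F κ • g κ = 0 := by
    intro d T F hT
    set π : M →ₗ[k] M :=
      (ℳ d).subtype ∘ₗ (DirectSum.component k ℕ (fun n => (ℳ n)) d) ∘ₗ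
        (DirectSum.decomposeLinearEquiv ℳ).toLinearMap with hπ
    have hπg : ∀ κ : ι × ℕ, π (g κ) = if κ.1.1 + κ.2 = d then g κ else 0 := by
      intro κ
      have hrfl : π (g κ) = ((DirectSum.decompose ℳ (g κ)) d : M) := rfl
      by_cases h : κ.1.1 + κ.2 = d
      · rw [if_pos h, hrfl]
        exact DirectSum.decompose_of_mem_same ℳ (h ▸ hgmem κ)
      · rw [if_neg h, hrfl]
        exact DirectSum.decompose_of_mem_ne ℳ (hgmem κ) h
    have h1 : π (∑ κ ∈ T, F κ • g κ) = ∑ κ ∈ T, F κ • π (g κ) := by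
      rw [map_sum]
      exact Finset.sum_congr rfl fun κ _ => π.map_smul _ _
    have h2 : ∑ κ ∈ T, F κ • π (g κ)
        = ∑ κ ∈ T.filter (fun κ => κ.1.1 + κ.2 = d), F κ • g κ := by
      rw [Finset.sum_filter]
      refine Finset.sum_congr rfl fun κ _ => ?_
      rw [hπg κ]
      split
      · rfl
      · rw [smul_zero]
    rw [hT, map_zero] at h1
    rw [← h2, ← h1]
  -- linear independence over k[X]
  have hind : LinearIndependent (Polynomial k) B := by
    rw [linearIndependent_iff']
    intro s p hzero i hi
    set N : ℕ := 1 + s.sup (fun i => (p i).natDegree) with hN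
    have hdeg : ∀ i ∈ s, (p i).natDegree < N := by
      intro i hi
      have h1 : (p i).natDegree ≤ s.sup (fun i => (p i).natDegree) :=
        Finset.le_sup (f := fun i => (p i).natDegree) hi
      omega
    set T : Finset (ι × ℕ) := s ×ˢ Finset.range N with hT
    set F : ι × ℕ → k := fun κ => (p κ.1).coeff κ.2 with hF
    have hTsum : ∑ κ ∈ T, F κ • g κ = 0 := by
      rw [hT, Finset.sum_product, ← hzero]
      refine Finset.sum_congr rfl fun i hi => ?_
      conv_rhs => rw [Polynomial.as_sum_range' (p i) N (hdeg i hi)]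
      rw [Finset.sum_smul]
      refine Finset.sum_congr rfl fun j hj => ?_
      show (p i).coeff j • ((X : k[X]) ^ j • B i) = _
      rw [← Polynomial.C_mul_X_pow_eq_monomial, mul_smul, ← Polynomial.algebraMap_eq,
        algebraMap_smul]
    have hF0 : ∀ κ ∈ T, F κ = 0 := by
      intro κ hκ
      exact key (κ.1.1 + κ.2) (T.filter (fun κ' => κ'.1.1 + κ'.2 = κ.1.1 + κ.2))
        (fun κ' hκ' => (Finset.mem_filter.1 hκ').2) F
        (hproj _ T F hTsum) κ (Finset.mem_filter.2 ⟨hκ, rfl⟩)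
    refine Polynomial.ext fun j => ?_
    rw [Polynomial.coeff_zero]
    by_cases hj : j < N
    · exact hF0 (i, j) (Finset.mem_product.2 ⟨hi, Finset.mem_range.2 hj⟩)
    · exact Polynomial.coeff_eq_zero_of_natDegree_lt
        (lt_of_lt_of_le (hdeg i hi) (le_of_not_gt hj))
  exact Module.Free.of_basis (Module.Basis.mk hind hspan.ge)
end

section
/- Let k be a field and n ≥ 0. Let M be a finitely generated module over the polynomial ring k[x] whose x-power-torsion submodule {m ∈ M | ∃ j, x^j·m = 0} is annihilated by x^n. Then the rank of M over k[x] (the dimension over the field of fractions k(x) of M ⊗_{k[x]} k(x)) equals the k-dimension of the submodule x^n·(M/x^{n+1}M) of M/x^{n+1}M. -/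
open Polynomial
open scoped TensorProduct

section RS

variable (k : Type*) {R : Type*} [CommSemiring k] [Semiring R] [Algebra k R]

/-- Restricting scalars is the identity as a `k`-linear equivalence when the module
already carries a compatible `k`-action. -/
def rsEquivAux (V : Type*) [AddCommMonoid V] [Module R V] [Module k V]
    [IsScalarTower k R V] : RestrictScalars k R V ≃ₗ[k] V :=
  { RestrictScalars.addEquiv k R V with
    map_smul' := fun c x => by
      show algebraMap k R c • (RestrictScalars.addEquiv k R V x)
          = c • (RestrictScalars.addEquiv k R V x)
      exact algebraMap_smul R c _ }

/-- `RestrictScalars` is functorial in `R`-linear equivalences. -/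
def rsCongrAux {V W : Type*} [AddCommMonoid V] [AddCommMonoid W] [Module R V] [Module R W]
    (e : V ≃ₗ[R] W) : RestrictScalars k R V ≃ₗ[k] RestrictScalars k R W :=
  { e.toAddEquiv with
    map_smul' := fun c x => e.map_smul (algebraMap k R c) x }

end RS

section L1

variable (R : Type*) [CommRing R] [IsDomain R]
variable (M : Type*) [AddCommGroup M] [Module R M]

/-- Tensoring with the fraction field kills the torsion submodule. -/
noncomputable def tensorQuotTorsionEquiv :
    TensorProduct R (FractionRing R) M ≃ₗ[FractionRing R]
      TensorProduct R (FractionRing R) (M ⧸ Submodule.torsion R M) := by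
  set K := FractionRing R
  set T := Submodule.torsion R M with hT
  have hzero : LinearMap.lTensor K T.subtype = 0 := by
    apply TensorProduct.ext'
    intro q t
    obtain ⟨a, ha⟩ := t.2
    rw [Submonoid.smul_def] at ha
    have hu : algebraMap R K (a : R) ≠ 0 :=
      IsFractionRing.to_map_ne_zero_of_mem_nonZeroDivisors a.2
    have : q ⊗ₜ[R] (t : M) = 0 := by
      calc q ⊗ₜ[R] (t : M)
          = ((algebraMap R K (a : R))⁻¹ * algebraMap R K (a : R)) • (q ⊗ₜ[R] (t : M)) := by
            rw [inv_mul_cancel₀ hu, one_smul]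
        _ = (algebraMap R K (a : R))⁻¹ • ((a : R) • (q ⊗ₜ[R] (t : M))) := by
            rw [mul_smul, algebraMap_smul]
        _ = 0 := by rw [← TensorProduct.tmul_smul, ha, TensorProduct.tmul_zero, smul_zero]
    simpa using this
  have hexact := Module.Flat.lTensor_exact (M := K) (LinearMap.exact_subtype_mkQ T)
  have hco : (⇑(LinearMap.baseChange K T.mkQ) : K ⊗[R] M → _) = ⇑(LinearMap.lTensor K T.mkQ) :=
    LinearMap.baseChange_eq_ltensor _
  refine LinearEquiv.ofBijective (LinearMap.baseChange K T.mkQ) ⟨?_, ?_⟩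
  · intro x y hxy
    rw [hco] at hxy
    have h0 : LinearMap.lTensor K T.mkQ (x - y) = 0 := by rw [map_sub, hxy, sub_self]
    obtain ⟨z, hz⟩ := (hexact _).mp h0
    rw [hzero] at hz
    simp only [LinearMap.zero_apply] at hz
    have hxy0 : x - y = 0 := hz.symm
    exact sub_eq_zero.mp hxy0
  · show Function.Surjective (LinearMap.baseChange K T.mkQ)
    rw [hco]
    exact LinearMap.lTensor_surjective K (Submodule.mkQ_surjective T)

end L1

section L2

variable (k : Type*) [Field k]

lemma mem_rangeX_iff (r : Polynomial k) :
    r ∈ LinearMap.range ((X : Polynomial k) •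
      (LinearMap.id : Polynomial k →ₗ[Polynomial k] Polynomial k)) ↔ (X : Polynomial k) ∣ r := by
  constructor
  · rintro ⟨p, rfl⟩
    exact ⟨p, by simp [smul_eq_mul]⟩
  · rintro ⟨p, rfl⟩
    exact ⟨p, by simp [smul_eq_mul]⟩

/-- `k[X] ⧸ (X) ≃ k` as `k`-modules. -/
noncomputable def quotXEquiv :
    ((Polynomial k) ⧸ LinearMap.range ((X : Polynomial k) •
      (LinearMap.id : Polynomial k →ₗ[Polynomial k] Polynomial k))) ≃ₗ[k] k := by
  set S := LinearMap.range ((X : Polynomial k) •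
      (LinearMap.id : Polynomial k →ₗ[Polynomial k] Polynomial k))
  let f : k →ₗ[k] (Polynomial k ⧸ S) :=
    (S.mkQ.restrictScalars k).comp (Algebra.linearMap k (Polynomial k))
  have hf : Function.Bijective f := by
    constructor
    · intro a b hab
      have h1 : Submodule.Quotient.mk (p := S) (algebraMap k (Polynomial k) a)
          = Submodule.Quotient.mk (algebraMap k (Polynomial k) b) := hab
      have h2 : (algebraMap k (Polynomial k) a) - algebraMap k (Polynomial k) b ∈ S :=
        (Submodule.Quotient.eq S).mp h1
      have h3 : (X : Polynomial k) ∣ C a - C b := (mem_rangeX_iff k _).mp h2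
      have h4 := Polynomial.X_dvd_iff.mp h3
      simpa using sub_eq_zero.mp (by simpa using h4)
    · intro q
      obtain ⟨p, rfl⟩ := Submodule.mkQ_surjective S q
      refine ⟨p.coeff 0, ?_⟩
      show Submodule.Quotient.mk (algebraMap k (Polynomial k) (p.coeff 0))
          = Submodule.Quotient.mk p
      rw [Submodule.Quotient.eq]
      refine (mem_rangeX_iff k _).mpr (Polynomial.X_dvd_iff.mpr ?_)
      simp [Polynomial.coeff_sub]
  exact (LinearEquiv.ofBijective f hf).symm

end L2

/-- For a finitely generated `k[x]`-module `M` whose `x`-power torsion is killed by `xⁿ`,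
the rank of `M` (the dimension of `M ⊗ k(x)` over `k(x)`) equals the `k`-dimension of
`xⁿ·(M/xⁿ⁺¹M)`. -/
theorem rank_eq_finrank_pow_smul_quotient (k : Type) [Field k] (n : ℕ)
    (M : Type) [AddCommGroup M] [Module (Polynomial k) M] [Module.Finite (Polynomial k) M]
    (htors : ∀ m : M, (∃ j : ℕ, (X : Polynomial k) ^ j • m = 0) →
      (X : Polynomial k) ^ n • m = 0) :
    Module.finrank (FractionRing (Polynomial k))
        (TensorProduct (Polynomial k) (FractionRing (Polynomial k)) M) =
      Module.finrank k (RestrictScalars k (Polynomial k)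
        ↥(LinearMap.range ((X : Polynomial k) ^ n •
          (LinearMap.id : (M ⧸ LinearMap.range ((X : Polynomial k) ^ (n + 1) •
              (LinearMap.id : M →ₗ[Polynomial k] M)))
            →ₗ[Polynomial k] (M ⧸ LinearMap.range ((X : Polynomial k) ^ (n + 1) •
              (LinearMap.id : M →ₗ[Polynomial k] M))))))) := by
  classical
  set R := Polynomial k with hR
  set K := FractionRing R with hK
  set T := Submodule.torsion R M with hTdef
  set Sx : Submodule R M := LinearMap.range ((X : R) • (LinearMap.id : M →ₗ[R] M)) with hSx
  set Sn1 : Submodule R M :=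
    LinearMap.range ((X : R) ^ (n + 1) • (LinearMap.id : M →ₗ[R] M)) with hSn1
  set φ : (M ⧸ Sn1) →ₗ[R] (M ⧸ Sn1) :=
    (X : R) ^ n • (LinearMap.id : (M ⧸ Sn1) →ₗ[R] (M ⧸ Sn1)) with hφ
  set g : M →ₗ[R] (M ⧸ Sn1) := φ.comp Sn1.mkQ with hg
  have hXmem : (X : R) ∈ nonZeroDivisors R :=
    mem_nonZeroDivisors_of_ne_zero Polynomial.X_ne_zero
  -- kernel of g
  have hgapply : ∀ m : M, g m = Submodule.Quotient.mk ((X : R) ^ n • m) := by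
    intro m
    show (X : R) ^ n • (Submodule.Quotient.mk m : M ⧸ Sn1) = _
    rw [← Submodule.Quotient.mk_smul]
  have hle : Sx ⊔ T ≤ LinearMap.ker g := by
    apply sup_le
    · rintro _ ⟨m', rfl⟩
      rw [LinearMap.mem_ker, hgapply]
      rw [Submodule.Quotient.mk_eq_zero]
      refine ⟨m', ?_⟩
      show (X : R) ^ (n + 1) • m' = (X : R) ^ n • ((X : R) • m')
      rw [smul_smul, ← pow_succ]
    · intro t ht
      rw [LinearMap.mem_ker, hgapply, Submodule.Quotient.mk_eq_zero]
      obtain ⟨a, ha⟩ := ht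
      rw [Submonoid.smul_def] at ha
      have ha0 : (a : R) ≠ 0 := nonZeroDivisors.ne_zero a.2
      obtain ⟨j, u, hu, hau⟩ := WfDvdMonoid.max_power_factor ha0 Polynomial.irreducible_X
      have hXu : (X : R) ^ j • (u • t) = 0 := by rw [smul_smul, ← hau, ha]
      have h2 : (X : R) ^ n • (u • t) = 0 := htors _ ⟨j, hXu⟩
      obtain ⟨c, d, hcd⟩ := Polynomial.irreducible_X.coprime_iff_not_dvd.mpr hu
      refine ⟨c • t, ?_⟩
      show (X : R) ^ (n + 1) • (c • t) = (X : R) ^ n • t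
      have h3 : ((X : R) ^ n * (d * u)) • t = 0 := by
        rw [show (X : R) ^ n * (d * u) = d * ((X : R) ^ n * u) by ring, mul_smul, mul_smul, h2,
          smul_zero]
      calc (X : R) ^ (n + 1) • (c • t)
          = ((X : R) ^ n * (c * X)) • t := by
            rw [smul_smul, show (X : R) ^ (n + 1) * c = (X : R) ^ n * (c * X) by ring]
        _ = ((X : R) ^ n * (c * X)) • t + ((X : R) ^ n * (d * u)) • t := by rw [h3, add_zero]
        _ = ((X : R) ^ n * (c * X) + (X : R) ^ n * (d * u)) • t := (add_smul _ _ t).symm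
        _ = ((X : R) ^ n * 1) • t := by rw [← mul_add, hcd]
        _ = (X : R) ^ n • t := by rw [mul_one]
  have hker : LinearMap.ker g = Sx ⊔ T := by
    refine le_antisymm ?_ hle
    intro m hm
    rw [LinearMap.mem_ker, hgapply, Submodule.Quotient.mk_eq_zero] at hm
    obtain ⟨m', hm'⟩ := hm
    · 
      have hm'2 : (X : R) ^ (n + 1) • m' = (X : R) ^ n • m := hm'
      have htm : m - (X : R) • m' ∈ T := by
        refine ⟨⟨(X : R) ^ n, pow_mem hXmem n⟩, ?_⟩
        rw [Submonoid.smul_def]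
        have : (X : R) ^ n • ((X : R) • m') = (X : R) ^ (n + 1) • m' := by
          rw [smul_smul, ← pow_succ]
        rw [smul_sub, this, hm'2, sub_self]
      have heq : m = (X : R) • m' + (m - (X : R) • m') := by abel
      rw [heq]
      exact Submodule.add_mem_sup ⟨m', rfl⟩ htm
  -- the torsion-free quotient
  haveI : Module.Finite R (M ⧸ T) := Module.Finite.quotient R T
  haveI : Module.IsTorsionFree R (M ⧸ T) := Submodule.QuotientTorsion.instIsTorsionFree
  haveI : Module.Free R (M ⧸ T) := Module.free_of_finite_type_torsion_free'
  set ι := Module.Free.ChooseBasisIndex R (M ⧸ T) with hι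
  set b : Module.Basis ι R (M ⧸ T) := Module.Free.chooseBasis R (M ⧸ T) with hb
  set Sx0 : Submodule R R := LinearMap.range ((X : R) •
    (LinearMap.id : R →ₗ[R] R)) with hSx0
  set SxN : Submodule R (M ⧸ T) := LinearMap.range ((X : R) •
    (LinearMap.id : (M ⧸ T) →ₗ[R] (M ⧸ T))) with hSxN
  set Sxι : Submodule R (ι → R) := LinearMap.range ((X : R) •
    (LinearMap.id : (ι → R) →ₗ[R] (ι → R))) with hSxι
  have hrangeg : LinearMap.range g = LinearMap.range φ :=
    LinearMap.range_comp_of_range_eq_top φ (Submodule.range_mkQ Sn1)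
  have e3 : Sx.map T.mkQ = SxN := by
    ext q
    constructor
    · rintro ⟨-, ⟨m', rfl⟩, rfl⟩
      exact ⟨T.mkQ m', by simp⟩
    · rintro ⟨q', rfl⟩
      obtain ⟨m', rfl⟩ := Submodule.mkQ_surjective T q'
      exact ⟨(X : R) • m', ⟨m', rfl⟩, by simp⟩
  have hmap : SxN.map ((b.equivFun : (M ⧸ T) ≃ₗ[R] ι → R) : (M ⧸ T) →ₗ[R] ι → R) = Sxι := by
    ext y
    constructor
    · rintro ⟨-, ⟨m', rfl⟩, rfl⟩
      exact ⟨b.equivFun m', (map_smul (b.equivFun : (M ⧸ T) ≃ₗ[R] ι → R) (X : R) m').symm⟩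
    · rintro ⟨y', rfl⟩
      refine ⟨(X : R) • b.equivFun.symm y', ⟨b.equivFun.symm y', rfl⟩, ?_⟩
      show b.equivFun ((X : R) • b.equivFun.symm y') = (X : R) • y'
      rw [map_smul, LinearEquiv.apply_symm_apply]
  have e5 : Sxι = Submodule.pi Set.univ fun _ : ι => Sx0 := by
    ext f
    constructor
    · rintro ⟨f', rfl⟩ i -
      exact ⟨f' i, rfl⟩
    · intro hf
      have h' : ∀ i : ι, ∃ c : R, (X : R) • c = f i := by
        intro i
        obtain ⟨c, hc⟩ := hf i (Set.mem_univ i)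
        exact ⟨c, hc⟩
      choose gg hgg using h'
      exact ⟨gg, funext fun i => hgg i⟩
  -- the big R-linear equivalence
  let E : (↥(LinearMap.range φ)) ≃ₗ[R] (∀ _ : ι, R ⧸ Sx0) :=
    (LinearEquiv.ofEq _ _ hrangeg.symm) ≪≫ₗ
    g.quotKerEquivRange.symm ≪≫ₗ
    Submodule.quotEquivOfEq _ _ hker ≪≫ₗ
    Submodule.quotEquivOfEq _ _ (sup_comm Sx T) ≪≫ₗ
    (Submodule.quotientQuotientEquivQuotientSup T Sx).symm ≪≫ₗ
    Submodule.quotEquivOfEq _ _ e3 ≪≫ₗ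
    Submodule.Quotient.equiv SxN Sxι (b.equivFun : (M ⧸ T) ≃ₗ[R] ι → R) hmap ≪≫ₗ
    Submodule.quotEquivOfEq _ _ e5 ≪≫ₗ
    Submodule.quotientPi _
  have E2 : RestrictScalars k R (↥(LinearMap.range φ)) ≃ₗ[k] (∀ _ : ι, R ⧸ Sx0) :=
    (rsCongrAux k E).trans (rsEquivAux k _)
  have E3 := E2.trans (LinearEquiv.piCongrRight fun _ : ι => quotXEquiv k)
  have hRHS : Module.finrank k (RestrictScalars k R (↥(LinearMap.range φ)))
      = Fintype.card ι := by
    rw [E3.finrank_eq, Module.finrank_pi]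
  have e0 := tensorQuotTorsionEquiv R M
  have hLHS : Module.finrank K (TensorProduct R K M) = Fintype.card ι := by
    rw [e0.finrank_eq, Module.finrank_baseChange,
      Module.finrank_eq_card_chooseBasisIndex]
  rw [hLHS, hRHS]
end

section
/- Let C be a chain complex of abelian groups equipped with a decreasing filtration by subcomplexes C = F⁰ ⊇ F¹ ⊇ F² ⊇ ⋯ such that in each degree n there exists K with (F^k)_n = 0 for all k ≥ K. Suppose that for each k ≥ 0, the quotient complex F^k/F^{k+1} satisfies H_j(F^k/F^{k+1}) = 0 for all j < 2k. Then for every k, H_j(F^k) = 0 for all j < 2k. -/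
/-- A complete decreasing filtration of a chain complex of abelian groups whose
associated graded pieces `F^k/F^{k+1}` have vanishing homology in degrees `< 2k`
has each stage `F^k` with vanishing homology in degrees `< 2k`. -/
theorem connectivity_of_filtration (A : ℤ → Type*) [∀ n, AddCommGroup (A n)]
    (d : ∀ n : ℤ, A n →+ A (n - 1))
    (hdd : ∀ (n : ℤ) (x : A n), d (n - 1) (d n x) = 0)
    (F : ∀ (_ : ℕ) (n : ℤ), AddSubgroup (A n))
    (hF0 : ∀ n, F 0 n = ⊤)
    (hFmono : ∀ k n, F (k + 1) n ≤ F k n)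
    (hFbdd : ∀ n : ℤ, ∃ K : ℕ, ∀ k ≥ K, F k n = ⊥)
    (hFd : ∀ (k : ℕ) (n : ℤ) (x : A n), x ∈ F k n → d n x ∈ F k (n - 1))
    -- vanishing of `H_{j-1}(F^k/F^{k+1})` for `j - 1 < 2k`
    (hgr : ∀ (k : ℕ) (j : ℤ), j - 1 < 2 * (k : ℤ) →
      ∀ x : A (j - 1), x ∈ F k (j - 1) → d (j - 1) x ∈ F (k + 1) (j - 1 - 1) →
        ∃ y ∈ F k j, x - d j y ∈ F (k + 1) (j - 1)) :
    -- vanishing of `H_{j-1}(F^k)` for `j - 1 < 2k`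
    ∀ (k : ℕ) (j : ℤ), j - 1 < 2 * (k : ℤ) →
      ∀ x : A (j - 1), x ∈ F k (j - 1) → d (j - 1) x = 0 →
        ∃ y ∈ F k j, x = d j y := by
  intro k j hj x hx hdx
  have hmono : ∀ (m k : ℕ) (n : ℤ), F (k + m) n ≤ F k n := by
    intro m
    induction m with
    | zero => intro k n; exact le_rfl
    | succ m ih => intro k n; exact (hFmono (k + m) n).trans (ih k n)
  have key : ∀ m : ℕ, ∃ z w, z ∈ F (k + m) (j - 1) ∧ d (j - 1) z = 0 ∧
      w ∈ F k j ∧ x = d j w + z := by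
    intro m
    induction m with
    | zero => exact ⟨x, 0, hx, hdx, (F k j).zero_mem, by simp⟩
    | succ m ih =>
      obtain ⟨z, w, hz, hdz, hw, hxw⟩ := ih
      obtain ⟨y, hy, hzy⟩ := hgr (k + m) j
        (by have := Int.natCast_nonneg m; push_cast; linarith) z hz
        (by rw [hdz]; exact (F (k + m + 1) (j - 1 - 1)).zero_mem)
      refine ⟨z - d j y, w + y, hzy, ?_, (F k j).add_mem hw (hmono m k j hy), ?_⟩
      · simp [map_sub, hdz, hdd j y]
      · rw [map_add, hxw]; abel
  obtain ⟨K, hK⟩ := hFbdd (j - 1)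
  obtain ⟨z, w, hz, _, hw, hxw⟩ := key K
  have hz0 : z = 0 := by
    rw [hK (k + K) (Nat.le_add_left K k)] at hz
    exact (AddSubgroup.mem_bot).mp hz
  exact ⟨w, hw, by simpa [hz0] using hxw⟩
end
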